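/- Let ε > 0, set a = ε/√2, and define φ₀ on (0,1] by φ₀(t) = (k−1)·a for t ∈ (2^{−(k+1)}, 2^{−k}], k = 0, 1, 2, …. Then φ₀ ∈ BMO^d_ε([0,1]) and the supremum of ⟨φ₀²⟩_J − (⟨φ₀⟩_J)² over all dyadic subintervals J of [0,1] equals ε²; moreover ∫₀¹ φ₀ = 0, ∫₀¹ φ₀² = ε², and: if ε < √2·log 2 then ∫₀¹ e^{φ₀(t)} dt = e^{−ε/√2}/(2 − e^{ε/√2}), while if ε ≥ √2·log 2 then e^{φ₀} is not integrable on (0,1]. -/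

import Mathlib

open MeasureTheory Real

/-- The average of `φ` over the interval with endpoints `a`, `b`. -/
noncomputable def avg (φ : ℝ → ℝ) (a b : ℝ) : ℝ := (∫ t in a..b, φ t) / (b - a)

/-- `φ ∈ BMO_ε([a,b])`: `φ` and `φ²` are integrable on `[a,b]` and the mean
oscillation `⟨φ²⟩_J − ⟨φ⟩_J²` is at most `ε²` on every nondegenerate
subinterval `J = [c,d] ⊆ [a,b]`. -/
def BMOe (ε a b : ℝ) (φ : ℝ → ℝ) : Prop :=
  IntervalIntegrable φ volume a b ∧
  IntervalIntegrable (fun t => (φ t) ^ 2) volume a b ∧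
  ∀ c d : ℝ, a ≤ c → c < d → d ≤ b →
    avg (fun t => (φ t) ^ 2) c d - (avg φ c d) ^ 2 ≤ ε ^ 2
/-- `φ ∈ BMO^d_ε([0,1])`: `φ` and `φ²` are integrable on `[0,1]` and the mean
oscillation is at most `ε²` on every dyadic subinterval
`[k/2^n, (k+1)/2^n]` of `[0,1]`. -/
def BMOd (ε : ℝ) (φ : ℝ → ℝ) : Prop :=
  IntervalIntegrable φ volume 0 1 ∧
  IntervalIntegrable (fun t => (φ t) ^ 2) volume 0 1 ∧
  ∀ n k : ℕ, k < 2 ^ n →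
    avg (fun t => (φ t) ^ 2) ((k : ℝ) / 2 ^ n) (((k : ℝ) + 1) / 2 ^ n)
      - (avg φ ((k : ℝ) / 2 ^ n) (((k : ℝ) + 1) / 2 ^ n)) ^ 2 ≤ ε ^ 2

section St4Aux

lemma st4_S0 : HasSum (fun k : ℕ => ((1:ℝ)/2)^k) 2 := by
  have h := hasSum_geometric_of_lt_one (by norm_num : (0:ℝ) ≤ 1/2) (by norm_num : (1/2:ℝ) < 1)
  norm_num at h; exact h

lemma st4_S1 : HasSum (fun k : ℕ => (k:ℝ) * (1/2)^k) 2 := by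
  have h := hasSum_coe_mul_geometric_of_norm_lt_one (r := (1/2:ℝ)) (by norm_num)
  norm_num at h; exact h

lemma st4_S2 : HasSum (fun k : ℕ => (k:ℝ)^2 * (1/2)^k) 6 := by
  have hsum : Summable (fun k : ℕ => (k:ℝ)^2 * (1/2)^k) := by
    simpa using summable_pow_mul_geometric_of_norm_lt_one (R := ℝ) 2 (r := 1/2) (by norm_num)
  have key : ∑' k : ℕ, (k:ℝ)^2 * (1/2)^k = 6 := by
    have h0 := (Summable.tsum_eq_zero_add hsum)
    have he : ∀ k : ℕ, ((k+1:ℕ):ℝ)^2 * (1/2)^(k+1)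
        = (1/2) * ((k:ℝ)^2 * (1/2)^k) + ((k:ℝ) * (1/2)^k) + (1/2) * (1/2)^k := by
      intro k; push_cast; ring
    rw [tsum_congr he] at h0
    rw [Summable.tsum_add (((hsum.mul_left _).add st4_S1.summable)) (st4_S0.summable.mul_left _),
        Summable.tsum_add (hsum.mul_left _) st4_S1.summable,
        tsum_mul_left, tsum_mul_left, st4_S1.tsum_eq, st4_S0.tsum_eq] at h0
    norm_num at h0
    linarith
  exact key ▸ hsum.hasSum

lemma st4_zpow (k : ℕ) : (2:ℝ) ^ (-(k:ℤ)) = (1/2:ℝ)^k := by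
  rw [zpow_neg, zpow_natCast, one_div, inv_pow]

lemma st4_zpow' (k : ℕ) : (2:ℝ) ^ (-(k:ℤ)-1) = (1/2:ℝ)^(k+1) := by
  have : (-(k:ℤ)-1) = -((k+1 : ℕ):ℤ) := by push_cast; ring
  rw [this, st4_zpow]

lemma st4_len (k : ℕ) :
    (volume (Set.Ioc ((1/2:ℝ)^(k+1)) ((1/2:ℝ)^k))).toReal = (1/2:ℝ)^(k+1) := by
  rw [Real.volume_Ioc, ENNReal.toReal_ofReal]
  · ring_nf
  · ring_nf; positivity

lemma st4_disj : Pairwise (Function.onFun Disjoint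
    (fun k : ℕ => Set.Ioc ((1/2:ℝ)^(k+1)) ((1/2:ℝ)^k))) := by
  intro i j hij
  wlog h : i < j generalizing i j
  · exact (this hij.symm (by omega)).symm
  refine Set.Ioc_disjoint_Ioc.2 ?_
  have : (1/2:ℝ)^j ≤ (1/2)^(i+1) := pow_le_pow_of_le_one (by norm_num) (by norm_num) (by omega)
  exact le_max_of_le_left (le_trans (min_le_right _ _) this)

lemma st4_union (n : ℕ) :
    (⋃ j : ℕ, Set.Ioc ((1/2:ℝ)^(n+j+1)) ((1/2:ℝ)^(n+j))) = Set.Ioc (0:ℝ) ((1/2)^n) := by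
  ext t
  simp only [Set.mem_iUnion, Set.mem_Ioc]
  constructor
  · rintro ⟨j, h1, h2⟩
    refine ⟨lt_of_le_of_lt (by positivity) h1, h2.trans ?_⟩
    exact pow_le_pow_of_le_one (by norm_num) (by norm_num) (by omega)
  · rintro ⟨ht0, htn⟩
    have hex : ∃ j, (1/2:ℝ)^(n + j + 1) < t := by
      obtain ⟨N, hN⟩ := exists_pow_lt_of_lt_one ht0 (by norm_num : (1/2:ℝ) < 1)
      exact ⟨N, lt_of_le_of_lt (pow_le_pow_of_le_one (by norm_num) (by norm_num) (by omega)) hN⟩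
    classical
    refine ⟨Nat.find hex, Nat.find_spec hex, ?_⟩
    cases h : Nat.find hex with
    | zero => simpa [h] using htn
    | succ m =>
      have hm := Nat.find_min hex (m := m) (by omega)
      push_neg at hm
      have he : n + m + 1 = n + (m+1) := by ring
      rw [he] at hm
      simpa [h] using hm

lemma st4_band_intOn (f : ℝ → ℝ) (c : ℝ) (k : ℕ)
    (hf : ∀ t ∈ Set.Ioc ((1/2:ℝ)^(k+1)) ((1/2:ℝ)^k), f t = c) :
    IntegrableOn f (Set.Ioc ((1/2:ℝ)^(k+1)) ((1/2:ℝ)^k)) := by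
  exact (integrableOn_const (C := c) measure_Ioc_lt_top.ne).congr_fun
    (fun t ht => (hf t ht).symm) measurableSet_Ioc

lemma st4_band_int (f : ℝ → ℝ) (c : ℝ) (k : ℕ)
    (hf : ∀ t ∈ Set.Ioc ((1/2:ℝ)^(k+1)) ((1/2:ℝ)^k), f t = c) :
    ∫ t in Set.Ioc ((1/2:ℝ)^(k+1)) ((1/2:ℝ)^k), f t = c * (1/2)^(k+1) := by
  rw [setIntegral_congr_fun measurableSet_Ioc hf, setIntegral_const, smul_eq_mul, measureReal_def, st4_len,
    mul_comm]

/-- Main tail machinery. -/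
lemma st4_tail (f : ℝ → ℝ) (c : ℕ → ℝ)
    (hf : ∀ k : ℕ, ∀ t ∈ Set.Ioc ((1/2:ℝ)^(k+1)) ((1/2:ℝ)^k), f t = c k) (n : ℕ)
    (habs : Summable (fun k : ℕ => |c k| * (1/2:ℝ)^(k+1))) (S : ℝ)
    (hS : HasSum (fun j : ℕ => c (n + j) * (1/2:ℝ)^(n + j + 1)) S) :
    IntegrableOn f (Set.Ioc (0:ℝ) ((1/2)^n)) ∧ ∫ t in Set.Ioc (0:ℝ) ((1/2)^n), f t = S := by
  have hint : IntegrableOn f (⋃ j : ℕ, Set.Ioc ((1/2:ℝ)^(n+j+1)) ((1/2:ℝ)^(n+j))) := by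
    apply integrableOn_iUnion_of_summable_integral_norm
      (fun j => st4_band_intOn f (c (n + j)) (n + j) (hf (n + j)))
    have he : ∀ j : ℕ, (∫ t in Set.Ioc ((1/2:ℝ)^(n+j+1)) ((1/2:ℝ)^(n+j)), ‖f t‖)
        = |c (n + j)| * (1/2:ℝ)^(n + j + 1) :=
      fun j => st4_band_int _ _ (n+j) (fun t ht => by rw [hf (n+j) t ht]; rfl)
    rw [summable_congr he]
    exact ((summable_nat_add_iff n).2 habs).congr (fun j => by rw [add_comm j n])
  have hdisj : Pairwise (Function.onFun Disjoint
      (fun j : ℕ => Set.Ioc ((1/2:ℝ)^(n+j+1)) ((1/2:ℝ)^(n+j)))) :=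
    fun i j hij => st4_disj (by omega)
  have hsum := hasSum_integral_iUnion (fun j => measurableSet_Ioc) hdisj hint
  rw [st4_union] at hint
  refine ⟨hint, ?_⟩
  rw [st4_union n] at hsum
  have he : ∀ j : ℕ, (∫ t in Set.Ioc ((1/2:ℝ)^(n+j+1)) ((1/2:ℝ)^(n+j)), f t)
      = c (n + j) * (1/2:ℝ)^(n + j + 1) := fun j => st4_band_int _ _ _ (hf (n + j))
  rw [funext he] at hsum
  exact (hS.unique hsum).symm

lemma st4_avg_const (f : ℝ → ℝ) (c d v : ℝ) (hcd : c < d)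
    (hf : ∀ t ∈ Set.Ioc c d, f t = v) : avg f c d = v := by
  rw [avg, intervalIntegral.integral_of_le hcd.le,
    setIntegral_congr_fun measurableSet_Ioc hf, setIntegral_const, smul_eq_mul,
    measureReal_def, Real.volume_Ioc, ENNReal.toReal_ofReal (by linarith), mul_comm, mul_div_assoc,
    div_self (by linarith : d - c ≠ 0), mul_one]

lemma st4_T1 (a : ℝ) (n : ℕ) :
    HasSum (fun j : ℕ => ((↑(n+j):ℝ) - 1) * a * (1/2:ℝ)^(n+j+1)) ((n:ℝ) * a * (1/2)^n) := by
  have h := ((st4_S0.mul_left ((n:ℝ)-1)).add st4_S1).mul_left (a * (1/2:ℝ)^(n+1))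
  have hfun : (fun j : ℕ => a * (1/2:ℝ)^(n+1) *
      (((n:ℝ)-1) * (1/2)^j + (j:ℝ) * (1/2)^j))
      = fun j : ℕ => ((↑(n+j):ℝ) - 1) * a * (1/2:ℝ)^(n+j+1) := by
    funext j
    have : (1/2:ℝ)^(n+j+1) = (1/2)^(n+1) * (1/2)^j := by
      rw [← pow_add]; congr 1; all_goals omega
    rw [this]; push_cast; ring
  have hval : a * (1/2:ℝ)^(n+1) * (((n:ℝ)-1) * 2 + 2) = (n:ℝ) * a * (1/2)^n := by
    rw [pow_succ]; ring
  rw [hfun, hval] at h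
  exact h

lemma st4_T2 (a : ℝ) (n : ℕ) :
    HasSum (fun j : ℕ => (((↑(n+j):ℝ) - 1) * a)^2 * (1/2:ℝ)^(n+j+1))
      (((n:ℝ)^2 + 2) * a^2 * (1/2)^n) := by
  have h := (((st4_S0.mul_left (((n:ℝ)-1)^2)).add (st4_S1.mul_left (2*((n:ℝ)-1)))).add
    st4_S2).mul_left (a^2 * (1/2:ℝ)^(n+1))
  have hfun : (fun j : ℕ => a^2 * (1/2:ℝ)^(n+1) *
      ((((n:ℝ)-1)^2 * (1/2)^j + 2*((n:ℝ)-1) * ((j:ℝ) * (1/2)^j)) + (j:ℝ)^2 * (1/2)^j))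
      = fun j : ℕ => (((↑(n+j):ℝ) - 1) * a)^2 * (1/2:ℝ)^(n+j+1) := by
    funext j
    have : (1/2:ℝ)^(n+j+1) = (1/2)^(n+1) * (1/2)^j := by
      rw [← pow_add]; congr 1; all_goals omega
    rw [this]; push_cast; ring
  have hval : a^2 * (1/2:ℝ)^(n+1) * ((((n:ℝ)-1)^2 * 2 + 2*((n:ℝ)-1) * 2) + 6)
      = ((n:ℝ)^2 + 2) * a^2 * (1/2)^n := by
    rw [pow_succ]; ring
  rw [hfun, hval] at h
  exact h

lemma st4_habs1 (a : ℝ) : Summable (fun k : ℕ => |((k:ℝ) - 1) * a| * (1/2:ℝ)^(k+1)) := by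
  have hg : Summable (fun k : ℕ => ((k:ℝ) + 1) * |a| * (1/2:ℝ)^(k+1)) := by
    have h := ((st4_S1.mul_left (|a|/2)).add (st4_S0.mul_left (|a|/2))).summable
    refine h.congr (fun k => ?_)
    rw [pow_succ]; ring
  refine Summable.of_nonneg_of_le (fun k => by positivity) (fun k => ?_) hg
  have h1 : |((k:ℝ) - 1) * a| ≤ ((k:ℝ) + 1) * |a| := by
    rw [abs_mul]
    gcongr
    calc |(k:ℝ) - 1| ≤ |(k:ℝ)| + 1 := by simpa using abs_sub (G := ℝ) (k:ℝ) 1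
      _ = (k:ℝ) + 1 := by rw [abs_of_nonneg (Nat.cast_nonneg k)]
  exact mul_le_mul_of_nonneg_right h1 (by positivity)

lemma st4_habs2 (a : ℝ) : Summable (fun k : ℕ => |(((k:ℝ) - 1) * a)^2| * (1/2:ℝ)^(k+1)) := by
  have h := (st4_T2 a 0).summable
  refine h.congr (fun k => ?_)
  simp only [zero_add]
  rw [abs_of_nonneg (sq_nonneg _)]

lemma st4_exp_geom (a : ℝ) (hha : a < Real.log 2) :
    HasSum (fun k : ℕ => Real.exp (((k:ℝ) - 1) * a) * (1/2:ℝ)^(k+1))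
      (Real.exp (-a) / (2 - Real.exp a)) := by
  have hea : Real.exp a < 2 := by
    calc Real.exp a < Real.exp (Real.log 2) := Real.exp_lt_exp.2 hha
      _ = 2 := Real.exp_log (by norm_num)
  have hx : Real.exp a / 2 < 1 := by linarith
  have h := (hasSum_geometric_of_lt_one (by positivity) hx).mul_left (Real.exp (-a) / 2)
  have hfun : (fun k : ℕ => Real.exp (-a) / 2 * (Real.exp a / 2)^k)
      = fun k : ℕ => Real.exp (((k:ℝ) - 1) * a) * (1/2:ℝ)^(k+1) := by
    funext k
    have h1 : Real.exp (((k:ℝ) - 1) * a) = (Real.exp a)^k * Real.exp (-a) := by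
      rw [← Real.exp_nat_mul, ← Real.exp_add]
      congr 1; ring
    rw [h1, div_pow, pow_succ, one_div_pow]
    ring
  have hval : Real.exp (-a) / 2 * (1 - Real.exp a / 2)⁻¹
      = Real.exp (-a) / (2 - Real.exp a) := by
    have h3 : (1 - Real.exp a / 2) = (2 - Real.exp a) / 2 := by ring
    rw [h3, inv_div, div_mul_div_comm, mul_comm (Real.exp (-a)) 2,
      mul_div_mul_left _ _ (two_ne_zero (α := ℝ))]
  rw [hfun, hval] at h
  exact h

end St4Aux

/-- Properties of the dyadic extremal function `φ₀`, with `φ₀(t) = (k−1)·a` on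
`(2^{−(k+1)}, 2^{−k}]` where `a = ε/√2`. -/
theorem stmt4 (ε : ℝ) (hε : 0 < ε) (a : ℝ) (ha : a = ε / Real.sqrt 2)
    (φ₀ : ℝ → ℝ)
    (hφ₀ : ∀ k : ℕ, ∀ t ∈ Set.Ioc ((2:ℝ) ^ (-(k:ℤ) - 1)) ((2:ℝ) ^ (-(k:ℤ))),
      φ₀ t = ((k : ℝ) - 1) * a) :
    BMOd ε φ₀ ∧
    IsLUB {v : ℝ | ∃ n k : ℕ, k < 2 ^ n ∧
        v = avg (fun t => (φ₀ t) ^ 2) ((k : ℝ) / 2 ^ n) (((k : ℝ) + 1) / 2 ^ n)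
            - (avg φ₀ ((k : ℝ) / 2 ^ n) (((k : ℝ) + 1) / 2 ^ n)) ^ 2} (ε ^ 2) ∧
    (∫ t in (0:ℝ)..1, φ₀ t) = 0 ∧
    (∫ t in (0:ℝ)..1, (φ₀ t) ^ 2) = ε ^ 2 ∧
    (ε < Real.sqrt 2 * Real.log 2 →
      IntervalIntegrable (fun t => Real.exp (φ₀ t)) volume 0 1 ∧
      (∫ t in (0:ℝ)..1, Real.exp (φ₀ t)) =
        Real.exp (-ε / Real.sqrt 2) / (2 - Real.exp (ε / Real.sqrt 2))) ∧
    (Real.sqrt 2 * Real.log 2 ≤ ε →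
      ¬ IntervalIntegrable (fun t => Real.exp (φ₀ t)) volume 0 1) := by
  have hs2 : (0:ℝ) < Real.sqrt 2 := Real.sqrt_pos.2 (by norm_num)
  have hs2sq : Real.sqrt 2 ^ 2 = 2 := Real.sq_sqrt (by norm_num)
  have ha2 : 2 * a ^ 2 = ε ^ 2 := by
    rw [ha, div_pow, hs2sq]; ring
  -- bands in (1/2)^k form
  have hb : ∀ k : ℕ, ∀ t ∈ Set.Ioc ((1/2:ℝ)^(k+1)) ((1/2:ℝ)^k), φ₀ t = ((k:ℝ) - 1) * a := by
    intro k t ht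
    refine hφ₀ k t ?_
    rw [st4_zpow, st4_zpow']
    exact ht
  have hb2 : ∀ k : ℕ, ∀ t ∈ Set.Ioc ((1/2:ℝ)^(k+1)) ((1/2:ℝ)^k),
      (φ₀ t) ^ 2 = (((k:ℝ) - 1) * a) ^ 2 := fun k t ht => by rw [hb k t ht]
  -- tail integrals
  have hT1 : ∀ n : ℕ, IntegrableOn φ₀ (Set.Ioc (0:ℝ) ((1/2)^n)) ∧
      ∫ t in Set.Ioc (0:ℝ) ((1/2)^n), φ₀ t = (n:ℝ) * a * (1/2)^n :=
    fun n => st4_tail φ₀ (fun k => ((k:ℝ) - 1) * a) hb n (st4_habs1 a) _ (st4_T1 a n)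
  have hT2 : ∀ n : ℕ, IntegrableOn (fun t => (φ₀ t)^2) (Set.Ioc (0:ℝ) ((1/2)^n)) ∧
      ∫ t in Set.Ioc (0:ℝ) ((1/2)^n), (φ₀ t)^2 = ((n:ℝ)^2 + 2) * a^2 * (1/2)^n :=
    fun n => st4_tail _ (fun k => (((k:ℝ) - 1) * a)^2) hb2 n (st4_habs2 a) _ (st4_T2 a n)
  -- interval integrals over [0,1]
  have h01 : ∀ f : ℝ → ℝ, (∫ t in (0:ℝ)..1, f t) = ∫ t in Set.Ioc (0:ℝ) (1:ℝ), f t :=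
    fun f => intervalIntegral.integral_of_le (by norm_num)
  have hIoc01 : Set.Ioc (0:ℝ) ((1/2:ℝ)^0) = Set.Ioc (0:ℝ) 1 := by norm_num
  have hint1 : (∫ t in (0:ℝ)..1, φ₀ t) = 0 := by
    rw [h01, ← hIoc01, (hT1 0).2]; norm_num
  have hint2 : (∫ t in (0:ℝ)..1, (φ₀ t)^2) = ε ^ 2 := by
    rw [h01, ← hIoc01, (hT2 0).2, ← ha2]; norm_num
  -- avg over dyadic intervals
  have hdyadic : ∀ n k : ℕ, k < 2 ^ n →
      avg (fun t => (φ₀ t) ^ 2) ((k : ℝ) / 2 ^ n) (((k : ℝ) + 1) / 2 ^ n)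
        - (avg φ₀ ((k : ℝ) / 2 ^ n) (((k : ℝ) + 1) / 2 ^ n)) ^ 2 ≤ ε ^ 2 := by
    intro n k hk
    have h2n : (0:ℝ) < 2 ^ n := by positivity
    have hcd : (k : ℝ) / 2 ^ n < ((k : ℝ) + 1) / 2 ^ n :=
      (div_lt_div_iff_of_pos_right h2n).2 (by linarith)
    rcases Nat.eq_zero_or_pos k with hk0 | hk1
    · -- k = 0 : interval [0, 2^{-n}], oscillation exactly ε²
      subst hk0
      have he0 : ((0:ℕ) : ℝ) / 2 ^ n = 0 := by norm_num
      have he1 : (((0:ℕ) : ℝ) + 1) / 2 ^ n = (1/2:ℝ) ^ n := by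
        rw [div_pow]; norm_num
      rw [he0, he1]
      have hpos : (0:ℝ) < (1/2:ℝ)^n := by positivity
      have havg1 : avg φ₀ 0 ((1/2:ℝ)^n) = (n:ℝ) * a := by
        rw [avg, intervalIntegral.integral_of_le hpos.le, (hT1 n).2, sub_zero,
          mul_div_assoc, div_self hpos.ne', mul_one]
      have havg2 : avg (fun t => (φ₀ t)^2) 0 ((1/2:ℝ)^n) = ((n:ℝ)^2 + 2) * a^2 := by
        rw [avg, intervalIntegral.integral_of_le hpos.le, (hT2 n).2, sub_zero,
          mul_div_assoc, div_self hpos.ne', mul_one]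
      rw [havg1, havg2, ← ha2]
      ring_nf
      nlinarith [sq_nonneg a, sq_nonneg ((n:ℝ)*a)]
    · -- k ≥ 1 : φ₀ is constant on the dyadic interval
      set L := Nat.log 2 k with hL
      have hL1 : 2 ^ L ≤ k := Nat.pow_log_le_self 2 (by omega)
      have hL2 : k < 2 ^ (L + 1) := Nat.lt_pow_succ_log_self (by norm_num) k
      have hLn : L + 1 ≤ n := by
        by_contra hc
        push_neg at hc
        have : 2 ^ n ≤ 2 ^ L := Nat.pow_le_pow_right (by norm_num) (by omega)
        omega
      set m := n - L - 1 with hm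
      have hmL : L + m + 1 = n := by omega
      have e1 : (2:ℝ) ^ L * (2:ℝ) ^ (m + 1) = 2 ^ n := by
        rw [← pow_add]; congr 1; all_goals omega
      have e2 : (2:ℝ) ^ (L + 1) * (2:ℝ) ^ m = 2 ^ n := by
        rw [← pow_add]; congr 1; all_goals omega
      have hlow : (1/2:ℝ) ^ (m + 1) ≤ (k:ℝ) / 2 ^ n := by
        rw [div_pow, one_pow, div_le_div_iff₀ (by positivity) h2n, one_mul, ← e1]
        have : ((2:ℝ)^L) ≤ (k:ℝ) := by exact_mod_cast hL1
        exact mul_le_mul_of_nonneg_right this (by positivity)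
      have hhigh : ((k:ℝ) + 1) / 2 ^ n ≤ (1/2:ℝ) ^ m := by
        rw [div_pow, one_pow, div_le_div_iff₀ h2n (by positivity), one_mul, ← e2]
        have : ((k:ℝ) + 1) ≤ (2:ℝ)^(L+1) := by exact_mod_cast hL2
        exact mul_le_mul_of_nonneg_right this (by positivity)
      have hconst : ∀ t ∈ Set.Ioc ((k:ℝ) / 2 ^ n) (((k:ℝ) + 1) / 2 ^ n),
          φ₀ t = ((m:ℝ) - 1) * a := by
        intro t ht
        exact hb m t ⟨lt_of_le_of_lt hlow ht.1, ht.2.trans hhigh⟩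
      have havg1 : avg φ₀ ((k:ℝ) / 2 ^ n) (((k:ℝ) + 1) / 2 ^ n) = ((m:ℝ) - 1) * a :=
        st4_avg_const _ _ _ _ hcd hconst
      have havg2 : avg (fun t => (φ₀ t)^2) ((k:ℝ) / 2 ^ n) (((k:ℝ) + 1) / 2 ^ n)
          = (((m:ℝ) - 1) * a) ^ 2 :=
        st4_avg_const _ _ _ _ hcd (fun t ht => by rw [hconst t ht])
      rw [havg1, havg2, sub_self]
      positivity
  -- integrability of φ₀ and φ₀² on [0,1]
  have hii1 : IntervalIntegrable φ₀ volume 0 1 := by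
    rw [intervalIntegrable_iff_integrableOn_Ioc_of_le (by norm_num)]
    rw [← hIoc01]; exact (hT1 0).1
  have hii2 : IntervalIntegrable (fun t => (φ₀ t)^2) volume 0 1 := by
    rw [intervalIntegrable_iff_integrableOn_Ioc_of_le (by norm_num)]
    rw [← hIoc01]; exact (hT2 0).1
  have hBMOd : BMOd ε φ₀ := ⟨hii1, hii2, hdyadic⟩
  -- the LUB
  have havg01 : ∀ f : ℝ → ℝ, avg f ((0:ℕ):ℝ) (((0:ℕ):ℝ) + 1) = ∫ t in (0:ℝ)..1, f t := by
    intro f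
    simp [avg]
  have hmem : ε ^ 2 ∈ {v : ℝ | ∃ n k : ℕ, k < 2 ^ n ∧
      v = avg (fun t => (φ₀ t) ^ 2) ((k : ℝ) / 2 ^ n) (((k : ℝ) + 1) / 2 ^ n)
          - (avg φ₀ ((k : ℝ) / 2 ^ n) (((k : ℝ) + 1) / 2 ^ n)) ^ 2} := by
    refine ⟨0, 0, by norm_num, ?_⟩
    simp only [pow_zero, div_one, Nat.cast_zero]
    have e1 : avg (fun t => (φ₀ t) ^ 2) 0 (0 + 1) = ε ^ 2 := by
      rw [show (0:ℝ) + 1 = 1 by norm_num, avg, sub_zero, div_one, hint2]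
    have e2 : avg φ₀ 0 (0 + 1) = 0 := by
      rw [show (0:ℝ) + 1 = 1 by norm_num, avg, sub_zero, div_one, hint1]
    rw [e1, e2]
    norm_num
  have hLUB : IsLUB {v : ℝ | ∃ n k : ℕ, k < 2 ^ n ∧
      v = avg (fun t => (φ₀ t) ^ 2) ((k : ℝ) / 2 ^ n) (((k : ℝ) + 1) / 2 ^ n)
          - (avg φ₀ ((k : ℝ) / 2 ^ n) (((k : ℝ) + 1) / 2 ^ n)) ^ 2} (ε ^ 2) := by
    constructor
    · rintro v ⟨n, k, hk, rfl⟩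
      exact hdyadic n k hk
    · intro b hb'
      exact hb' hmem
  refine ⟨hBMOd, hLUB, hint1, hint2, ?_, ?_⟩
  · -- subcritical : exponential integrable with explicit value
    intro hlt
    have haln : a < Real.log 2 := by
      rw [ha, div_lt_iff₀ hs2]
      linarith [hlt, mul_comm (Real.sqrt 2) (Real.log 2)]
    have hbe : ∀ k : ℕ, ∀ t ∈ Set.Ioc ((1/2:ℝ)^(k+1)) ((1/2:ℝ)^k),
        Real.exp (φ₀ t) = Real.exp (((k:ℝ) - 1) * a) := fun k t ht => by rw [hb k t ht]
    have habs : Summable (fun k : ℕ => |Real.exp (((k:ℝ) - 1) * a)| * (1/2:ℝ)^(k+1)) := by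
      refine (st4_exp_geom a haln).summable.congr (fun k => ?_)
      rw [abs_of_pos (Real.exp_pos _)]
    have hT3 := st4_tail (fun t => Real.exp (φ₀ t)) (fun k => Real.exp (((k:ℝ) - 1) * a))
      hbe 0 habs _ (by simpa using st4_exp_geom a haln)
    constructor
    · rw [intervalIntegrable_iff_integrableOn_Ioc_of_le (by norm_num), ← hIoc01]
      exact hT3.1
    · rw [h01, ← hIoc01, hT3.2, ha]
      rw [neg_div]
  · -- supercritical : exponential not integrable
    intro hge hI
    have haln : Real.log 2 ≤ a := by
      rw [ha, le_div_iff₀ hs2]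
      linarith [hge, mul_comm (Real.sqrt 2) (Real.log 2)]
    have hea : (2:ℝ) ≤ Real.exp a := by
      calc (2:ℝ) = Real.exp (Real.log 2) := (Real.exp_log (by norm_num)).symm
        _ ≤ Real.exp a := Real.exp_le_exp.2 haln
    have hIoc : IntegrableOn (fun t => Real.exp (φ₀ t)) (Set.Ioc (0:ℝ) 1) := by
      rw [← intervalIntegrable_iff_integrableOn_Ioc_of_le (by norm_num)]
      exact hI
    set C := ∫ t in Set.Ioc (0:ℝ) 1, Real.exp (φ₀ t) with hC
    have hbound : ∀ N : ℕ, (N:ℝ) * (Real.exp (-a) / 2) ≤ C := by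
      intro N
      have hsub : ∀ k : ℕ, Set.Ioc ((1/2:ℝ)^(k+1)) ((1/2:ℝ)^k) ⊆ Set.Ioc (0:ℝ) 1 := by
        intro k t ht
        exact ⟨lt_of_le_of_lt (by positivity) ht.1,
          ht.2.trans (pow_le_one₀ (by norm_num) (by norm_num))⟩
      have hdisjf : Set.Pairwise (↑(Finset.range N)) (Function.onFun Disjoint
          (fun k : ℕ => Set.Ioc ((1/2:ℝ)^(k+1)) ((1/2:ℝ)^k))) :=
        fun i _ j _ hij => st4_disj hij
      have hsum : ∫ t in (⋃ k ∈ Finset.range N, Set.Ioc ((1/2:ℝ)^(k+1)) ((1/2:ℝ)^k)),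
          Real.exp (φ₀ t)
          = ∑ k ∈ Finset.range N, ∫ t in Set.Ioc ((1/2:ℝ)^(k+1)) ((1/2:ℝ)^k),
              Real.exp (φ₀ t) :=
        integral_biUnion_finset (Finset.range N) (fun k _ => measurableSet_Ioc) hdisjf
          (fun k _ => hIoc.mono_set (hsub k))
      have hmono : ∫ t in (⋃ k ∈ Finset.range N, Set.Ioc ((1/2:ℝ)^(k+1)) ((1/2:ℝ)^k)),
          Real.exp (φ₀ t) ≤ C := by
        apply setIntegral_mono_set hIoc
        · exact Filter.Eventually.of_forall (fun t => (Real.exp_pos _).le)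
        · exact HasSubset.Subset.eventuallyLE (Set.iUnion₂_subset (fun k _ => hsub k))
      have hterm : ∀ k : ℕ, ∫ t in Set.Ioc ((1/2:ℝ)^(k+1)) ((1/2:ℝ)^k), Real.exp (φ₀ t)
          = Real.exp (((k:ℝ) - 1) * a) * (1/2:ℝ)^(k+1) :=
        fun k => st4_band_int _ _ k (fun t ht => by rw [hb k t ht])
      have htermge : ∀ k : ℕ, Real.exp (-a) / 2 ≤ Real.exp (((k:ℝ) - 1) * a) * (1/2:ℝ)^(k+1) := by
        intro k
        have h1 : Real.exp (((k:ℝ) - 1) * a) * (1/2:ℝ)^(k+1)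
            = Real.exp (-a) / 2 * (Real.exp a / 2)^k := by
          have h2 : Real.exp (((k:ℝ) - 1) * a) = (Real.exp a)^k * Real.exp (-a) := by
            rw [← Real.exp_nat_mul, ← Real.exp_add]; congr 1; ring
          rw [h2, div_pow, pow_succ, div_pow]; ring
        rw [h1]
        have h3 : (1:ℝ) ≤ Real.exp a / 2 := by linarith
        have h4 : (1:ℝ) ≤ (Real.exp a / 2)^k := one_le_pow₀ h3
        nlinarith [Real.exp_pos (-a)]
      calc (N:ℝ) * (Real.exp (-a) / 2)
          = ∑ _k ∈ Finset.range N, Real.exp (-a) / 2 := by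
            rw [Finset.sum_const, Finset.card_range, nsmul_eq_mul]
        _ ≤ ∑ k ∈ Finset.range N, ∫ t in Set.Ioc ((1/2:ℝ)^(k+1)) ((1/2:ℝ)^k),
              Real.exp (φ₀ t) := by
            apply Finset.sum_le_sum
            intro k _
            rw [hterm k]
            exact htermge k
        _ ≤ C := by rw [← hsum]; exact hmono
    obtain ⟨N, hN⟩ := exists_nat_gt (C / (Real.exp (-a) / 2))
    have hpos : (0:ℝ) < Real.exp (-a) / 2 := by positivity
    have := hbound N
    rw [div_lt_iff₀ hpos] at hN
    linarith
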